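/- Assume β_p > γ and set y*_u = 1 − γ/β_p. Then y*_u ∈ (0,1), the point (y*_u, 1, 0) is an equilibrium of the coupled SIS epidemic–replicator dynamics, and the Jacobian at (y*_u, 1, 0) is the upper-triangular matrix with diagonal entries (γ − β_p, −(c_P − L(1−α)β_p·y*_u), c_IP − c_IU) and off-diagonal entries d₂ = y*_u(1−y*_u)(1−α)β_p and d₃ = y*_u(1−y*_u)(β_u − β_p) in positions (1,2) and (1,3). All eigenvalues of this Jacobian are negative if y*_u < y*_int, while if y*_u > y*_int the Jacobian has a positive eigenvalue. -/

import Mathlib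

/-- The vector field of the coupled SIS epidemic–replicator dynamics,
with components (f_y, f_S, f_I) in the variables x = (y, z_S, z_I). -/
noncomputable def sisField (βu βp α γ cP L cIU cIP : ℝ) (x : Fin 3 → ℝ) : Fin 3 → ℝ :=
  ![((1 - x 0) * (x 1 + α * (1 - x 1)) * (βu * x 2 + βp * (1 - x 2)) - γ) * x 0,
    x 1 * (1 - x 1) * (cP - L * (1 - α) * (βu * x 2 + βp * (1 - x 2)) * x 0),
    x 2 * (1 - x 2) * (cIP - cIU)]

set_option maxHeartbeats 1000000 in
/-- If β_p > γ then y*_u = 1 − γ/β_p ∈ (0,1), E2 = (y*_u, 1, 0) is an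
equilibrium of the coupled SIS dynamics, and the Jacobian there is the
upper-triangular matrix with diagonal (γ − β_p, −(c_P − L(1−α)β_p y*_u), c_IP − c_IU)
and entries d₂ = y*_u(1−y*_u)(1−α)β_p, d₃ = y*_u(1−y*_u)(β_u − β_p) in positions
(1,2) and (1,3).  All its eigenvalues are negative if y*_u < y*_int, and it has a
positive eigenvalue if y*_u > y*_int. -/
theorem E2_equilibrium_and_stability
    (βu βp α γ cP L cIU cIP : ℝ)
    (hβ : βu > βp) (hα : α ∈ Set.Ioo (0:ℝ) 1) (hγ : γ > 0) (hβpγ : βp > γ)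
    (hcP : cP > 0) (hL : L > 0) (hc : cIU > cIP) (hcIP : cIP ≥ 0) :
    (1 - γ / βp) ∈ Set.Ioo (0:ℝ) 1 ∧
    sisField βu βp α γ cP L cIU cIP ![1 - γ / βp, 1, 0] = 0 ∧
    HasFDerivAt (sisField βu βp α γ cP L cIU cIP)
      (LinearMap.toContinuousLinearMap (Matrix.mulVecLin
        (!![γ - βp, (1 - γ / βp) * (1 - (1 - γ / βp)) * (1 - α) * βp,
              (1 - γ / βp) * (1 - (1 - γ / βp)) * (βu - βp);
            0, -(cP - L * (1 - α) * βp * (1 - γ / βp)), 0;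
            0, 0, cIP - cIU])))
      ![1 - γ / βp, 1, 0] ∧
    (1 - γ / βp < cP / (L * (1 - α) * βp) →
      ∀ μ : ℝ, (∃ v : Fin 3 → ℝ, v ≠ 0 ∧
        (!![γ - βp, (1 - γ / βp) * (1 - (1 - γ / βp)) * (1 - α) * βp,
              (1 - γ / βp) * (1 - (1 - γ / βp)) * (βu - βp);
            0, -(cP - L * (1 - α) * βp * (1 - γ / βp)), 0;
            0, 0, cIP - cIU]).mulVec v = μ • v) → μ < 0) ∧
    (1 - γ / βp > cP / (L * (1 - α) * βp) →
      ∃ μ : ℝ, 0 < μ ∧ ∃ v : Fin 3 → ℝ, v ≠ 0 ∧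
        (!![γ - βp, (1 - γ / βp) * (1 - (1 - γ / βp)) * (1 - α) * βp,
              (1 - γ / βp) * (1 - (1 - γ / βp)) * (βu - βp);
            0, -(cP - L * (1 - α) * βp * (1 - γ / βp)), 0;
            0, 0, cIP - cIU]).mulVec v = μ • v) := by
  obtain ⟨hα0, hα1⟩ := hα
  have hβp : (0:ℝ) < βp := hγ.trans hβpγ
  have hβpne : βp ≠ 0 := ne_of_gt hβp
  have hdiv1 : γ / βp < 1 := (div_lt_one hβp).2 hβpγ
  have hdiv0 : 0 < γ / βp := div_pos hγ hβp
  have hD : 0 < L * (1 - α) * βp := by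
    have h1α : 0 < 1 - α := by linarith
    positivity
  refine ⟨⟨by linarith, by linarith⟩, ?_, ?_, ?_, ?_⟩
  · -- equilibrium
    funext i
    fin_cases i <;>
      simp [sisField] <;>
      field_simp <;>
      simp
  · -- Jacobian
    apply hasFDerivAt_pi''
    have h0 : HasFDerivAt (fun x : Fin 3 → ℝ => x 0) (ContinuousLinearMap.proj (R := ℝ) (φ := fun _ : Fin 3 => ℝ) 0)
        ![1 - γ / βp, 1, 0] := hasFDerivAt_apply (𝕜 := ℝ) (0 : Fin 3) ![1 - γ / βp, 1, 0]
    have h1 : HasFDerivAt (fun x : Fin 3 → ℝ => x 1) (ContinuousLinearMap.proj (R := ℝ) (φ := fun _ : Fin 3 => ℝ) 1)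
        ![1 - γ / βp, 1, 0] := hasFDerivAt_apply (𝕜 := ℝ) (1 : Fin 3) ![1 - γ / βp, 1, 0]
    have h2 : HasFDerivAt (fun x : Fin 3 → ℝ => x 2) (ContinuousLinearMap.proj (R := ℝ) (φ := fun _ : Fin 3 => ℝ) 2)
        ![1 - γ / βp, 1, 0] := hasFDerivAt_apply (𝕜 := ℝ) (2 : Fin 3) ![1 - γ / βp, 1, 0]
    intro i
    fin_cases i
    · have hf := ((((h0.const_sub 1).mul (h1.add ((h1.const_sub 1).const_mul α))).mul
        ((h2.const_mul βu).add ((h2.const_sub 1).const_mul βp))).sub_const γ).mul h0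
      refine (hf.congr_fderiv ?_).congr_of_eventuallyEq ?_
      · apply ContinuousLinearMap.ext
        intro v
        simp [Matrix.mulVec, dotProduct, Fin.sum_univ_three, smul_eq_mul]
        try field_simp
        try ring
      · filter_upwards with x
        simp [sisField]
    · have hf := (h1.mul (h1.const_sub 1)).mul
        (((((h2.const_mul βu).add ((h2.const_sub 1).const_mul βp)).const_mul
          (L * (1 - α))).mul h0).const_sub cP)
      refine (hf.congr_fderiv ?_).congr_of_eventuallyEq ?_
      · apply ContinuousLinearMap.ext
        intro v
        simp [Matrix.mulVec, dotProduct, Fin.sum_univ_three, smul_eq_mul]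
        try field_simp
        try ring
      · filter_upwards with x
        simp [sisField]
    · have hf := (h2.mul (h2.const_sub 1)).mul_const (cIP - cIU)
      refine (hf.congr_fderiv ?_).congr_of_eventuallyEq ?_
      · apply ContinuousLinearMap.ext
        intro v
        simp [Matrix.mulVec, dotProduct, Fin.sum_univ_three, smul_eq_mul]
        try field_simp
        try ring
      · filter_upwards with x
        simp [sisField]
  · -- all eigenvalues negative
    intro hlt μ ⟨v, hv, hMv⟩
    have hd1 : L * (1 - α) * βp * (1 - γ / βp) < cP := by
      have := (lt_div_iff₀ hD).1 hlt
      nlinarith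
    have e0 := congrFun hMv 0
    have e1 := congrFun hMv 1
    have e2 := congrFun hMv 2
    simp [Matrix.mulVec, dotProduct, Fin.sum_univ_three] at e0 e1 e2
    by_cases hv2 : v 2 = 0
    · by_cases hv1 : v 1 = 0
      · have hv0 : v 0 ≠ 0 := by
          intro hv0
          apply hv
          funext i
          fin_cases i <;> simp [hv0, hv1, hv2]
        have : γ - βp = μ := by
          rw [hv1, hv2] at e0
          have h := e0
          field_simp at h
          rcases mul_eq_mul_right_iff.1 (by linarith [h] : (γ - βp) * v 0 = μ * v 0) with h' | h'
          · exact h'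
          · exact absurd h' hv0
        linarith
      · rcases e1 with h' | h'
        · linarith [hd1]
        · exact absurd h' hv1
    · rcases e2 with h' | h'
      · linarith
      · exact absurd h' hv2
  · -- a positive eigenvalue exists
    intro hgt
    have hd1 : cP < L * (1 - α) * βp * (1 - γ / βp) := by
      have := (div_lt_iff₀ hD).1 hgt
      nlinarith
    set μ := -(cP - L * (1 - α) * βp * (1 - γ / βp)) with hμdef
    have hμ : 0 < μ := by rw [hμdef]; linarith
    have hden : μ - (γ - βp) ≠ 0 := by
      have : γ - βp < 0 := by linarith
      intro h; nlinarith
    refine ⟨μ, hμ, ![((1 - γ / βp) * (1 - (1 - γ / βp)) * (1 - α) * βp) / (μ - (γ - βp)),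
      1, 0], ?_, ?_⟩
    · intro h
      have := congrFun h 1
      simp at this
    · funext i
      fin_cases i <;>
        simp [Matrix.mulVec, dotProduct, Fin.sum_univ_three]
      field_simp
      ring
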